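/- The improper integral ∫_{0}^{∞} sin⁴(v/2) / v³ dv converges and equals (ln 2)/4. -/

import Mathlib

open MeasureTheory
open Filter Real Set


lemma expTermTendsto (t a : ℝ) (ht : 0 < t) :
    Tendsto (fun v : ℝ => Real.exp (-(t*v)) * (t * Real.cos (a*v) - a * Real.sin (a*v)) / (t^2+a^2))
      atTop (nhds 0) := by
  have hexp : Tendsto (fun v : ℝ => Real.exp (-(t*v))) atTop (nhds 0) := by
    have h1 : Tendsto (fun v : ℝ => t * v) atTop atTop :=
      Tendsto.const_mul_atTop ht tendsto_id
    have h2 : Tendsto (fun v : ℝ => -(t * v)) atTop atBot := tendsto_neg_atBot_iff.mpr h1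
    exact Real.tendsto_exp_atBot.comp h2
  have hb : Tendsto (fun v : ℝ => Real.exp (-(t*v)) * (t * Real.cos (a*v) - a * Real.sin (a*v)))
      atTop (nhds 0) := by
    refine squeeze_zero_norm (a := fun v => (|t| + |a|) * Real.exp (-(t*v))) ?_ ?_
    · intro v
      rw [norm_mul, Real.norm_eq_abs, Real.norm_eq_abs, Real.abs_exp, mul_comm]
      apply mul_le_mul_of_nonneg_right _ (Real.exp_pos _).le
      calc |t * Real.cos (a*v) - a * Real.sin (a*v)|
          ≤ |t * Real.cos (a*v)| + |a * Real.sin (a*v)| := abs_sub _ _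
        _ ≤ |t| * 1 + |a| * 1 := by
            rw [abs_mul, abs_mul]
            gcongr
            exacts [Real.abs_cos_le_one _, Real.abs_sin_le_one _]
        _ = |t| + |a| := by ring
    · simpa using hexp.const_mul (|t| + |a|)
  simpa using hb.div_const (t^2+a^2)

lemma hasDerivAtQ (t a v : ℝ) (ht : 0 < t) :
    HasDerivAt (fun v : ℝ => Real.exp (-(t*v)) * (t * Real.cos (a*v) - a * Real.sin (a*v)) / (t^2+a^2))
      (-(Real.exp (-(t*v)) * Real.cos (a*v))) v := by
  have hta : t^2 + a^2 ≠ 0 := by positivity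
  have hexp : HasDerivAt (fun v : ℝ => Real.exp (-(t*v))) (-t * Real.exp (-(t*v))) v := by
    have h1 : HasDerivAt (fun v : ℝ => -(t*v)) (-t) v := by
      simpa using ((hasDerivAt_id v).const_mul t).fun_neg
    simpa [mul_comm] using h1.exp
  have hcos : HasDerivAt (fun v : ℝ => Real.cos (a*v)) (-(a * Real.sin (a*v))) v := by
    have h1 : HasDerivAt (fun v : ℝ => a*v) a v := by
      simpa using (hasDerivAt_id v).const_mul a
    simpa [mul_comm] using h1.cos
  have hsin : HasDerivAt (fun v : ℝ => Real.sin (a*v)) (a * Real.cos (a*v)) v := by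
    have h1 : HasDerivAt (fun v : ℝ => a*v) a v := by
      simpa using (hasDerivAt_id v).const_mul a
    simpa [mul_comm] using h1.sin
  have hin : HasDerivAt (fun v : ℝ => t * Real.cos (a*v) - a * Real.sin (a*v))
      (t * (-(a * Real.sin (a*v))) - a * (a * Real.cos (a*v))) v :=
    (hcos.const_mul t).sub (hsin.const_mul a)
  have := (hexp.mul hin).div_const (t^2+a^2)
  refine this.congr_deriv ?_
  field_simp
  ring

lemma tendsto_pow_mul_exp_neg_mul_atTop_nhds_zero (n : ℕ) {v : ℝ} (hv : 0 < v) :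
    Filter.Tendsto (fun t : ℝ => t^n * Real.exp (-(v*t))) Filter.atTop (nhds 0) := by
  have h1 : Filter.Tendsto (fun t : ℝ => v*t) Filter.atTop Filter.atTop :=
    Filter.Tendsto.const_mul_atTop hv Filter.tendsto_id
  have h2 := (tendsto_pow_mul_exp_neg_atTop_nhds_zero n).comp h1
  have h3 := h2.const_mul ((1:ℝ)/v^n)
  rw [mul_zero] at h3
  refine h3.congr (fun t => ?_)
  simp only [Function.comp]
  rw [mul_pow]
  field_simp

lemma lemA {v : ℝ} (hv : 0 < v) :
    IntegrableOn (fun t : ℝ => t ^ 2 * Real.exp (-(t*v))) (Set.Ioi 0) volume ∧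
    ∫ t in Set.Ioi (0:ℝ), t ^ 2 * Real.exp (-(t*v)) = 2 / v ^ 3 := by
  set g : ℝ → ℝ := fun t => -(Real.exp (-(t*v)) * (t^2/v + 2*t/v^2 + 2/v^3)) with hg
  have hderiv : ∀ t ∈ Set.Ici (0:ℝ), HasDerivAt g (t ^ 2 * Real.exp (-(t*v))) t := by
    intro t _
    have hexp : HasDerivAt (fun t : ℝ => Real.exp (-(t*v))) (-v * Real.exp (-(t*v))) t := by
      have h1 : HasDerivAt (fun t : ℝ => -(t*v)) (-v) t := by
        simpa using ((hasDerivAt_id t).mul_const v).fun_neg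
      simpa [mul_comm] using h1.exp
    have hp : HasDerivAt (fun t : ℝ => t^2/v + 2*t/v^2 + 2/v^3) (2*t/v + 2/v^2) t := by
      have h1 : HasDerivAt (fun t : ℝ => t^2/v) (2*t/v) t := by
        simpa using ((hasDerivAt_pow 2 t).div_const v)
      have h2 : HasDerivAt (fun t : ℝ => 2*t/v^2) (2/v^2) t := by
        have := (((hasDerivAt_id t).const_mul 2).div_const (v^2))
        simpa [mul_div_assoc] using this
      simpa using (h1.add h2).add_const (2/v^3)
    have := (hexp.mul hp).neg
    refine this.congr_deriv ?_
    field_simp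
    ring
  have hpos : ∀ t ∈ Set.Ioi (0:ℝ), 0 ≤ t ^ 2 * Real.exp (-(t*v)) := fun t _ => by positivity
  have htend : Filter.Tendsto g Filter.atTop (nhds 0) := by
    have h1 : ∀ t : ℝ, g t = -(1/v * (t^2 * Real.exp (-(v*t))) + 2/v^2 * (t^1 * Real.exp (-(v*t)))
        + 2/v^3 * Real.exp (-(v*t))) := by
      intro t; simp only [hg, mul_comm v t]; ring
    rw [funext h1]
    have e2 : Filter.Tendsto (fun t : ℝ => t^2 * Real.exp (-(v*t))) Filter.atTop (nhds 0) :=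
      tendsto_pow_mul_exp_neg_mul_atTop_nhds_zero 2 hv
    have e1 : Filter.Tendsto (fun t : ℝ => t^1 * Real.exp (-(v*t))) Filter.atTop (nhds 0) :=
      tendsto_pow_mul_exp_neg_mul_atTop_nhds_zero 1 hv
    have e0 : Filter.Tendsto (fun t : ℝ => Real.exp (-(v*t))) Filter.atTop (nhds 0) := by
      simpa using tendsto_pow_mul_exp_neg_mul_atTop_nhds_zero 0 hv
    have := (((e2.const_mul (1/v)).add (e1.const_mul (2/v^2))).add (e0.const_mul (2/v^3))).neg
    simpa using this
  constructor
  · exact integrableOn_Ioi_deriv_of_nonneg' hderiv hpos htend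
  · rw [integral_Ioi_of_hasDerivAt_of_nonneg' hderiv hpos htend]
    simp [hg]

lemma sin_pow_four_identity (v : ℝ) :
    Real.sin (v/2) ^ 4 = (3 - 4 * Real.cos v + Real.cos (2*v)) / 8 := by
  have h1 : Real.cos v = 1 - 2 * Real.sin (v/2)^2 := by
    have hc := Real.cos_two_mul (v/2)
    have hp := Real.sin_sq_add_cos_sq (v/2)
    have hv : 2*(v/2) = v := by ring
    rw [hv] at hc
    nlinarith
  have h2 : Real.cos (2*v) = 2 * Real.cos v ^ 2 - 1 := Real.cos_two_mul v
  rw [h2, h1]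
  ring

lemma lemB {t : ℝ} (ht : 0 < t) :
    IntegrableOn (fun v : ℝ => Real.sin (v/2) ^ 4 * Real.exp (-(t*v))) (Set.Ioi 0) volume ∧
    ∫ v in Set.Ioi (0:ℝ), Real.sin (v/2) ^ 4 * Real.exp (-(t*v))
      = (3/t - 4*t/(t^2+1) + t/(t^2+4)) / 8 := by
  set G : ℝ → ℝ := fun v =>
    -(3 * (Real.exp (-(t*v)) * (t * Real.cos (0*v) - 0 * Real.sin (0*v)) / (t^2+0^2))
      - 4 * (Real.exp (-(t*v)) * (t * Real.cos (1*v) - 1 * Real.sin (1*v)) / (t^2+1^2))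
      + Real.exp (-(t*v)) * (t * Real.cos (2*v) - 2 * Real.sin (2*v)) / (t^2+2^2)) / 8 with hG
  have hderiv : ∀ v ∈ Set.Ici (0:ℝ),
      HasDerivAt G (Real.sin (v/2) ^ 4 * Real.exp (-(t*v))) v := by
    intro v _
    have h0 := hasDerivAtQ t 0 v ht
    have h1 := hasDerivAtQ t 1 v ht
    have h2 := hasDerivAtQ t 2 v ht
    have := (((h0.const_mul 3).sub (h1.const_mul 4)).add h2).neg.div_const 8
    refine this.congr_deriv ?_
    rw [sin_pow_four_identity v]
    simp only [zero_mul, one_mul, Real.cos_zero]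
    ring
  have hpos : ∀ v ∈ Set.Ioi (0:ℝ), 0 ≤ Real.sin (v/2) ^ 4 * Real.exp (-(t*v)) :=
    fun v _ => by positivity
  have htend : Filter.Tendsto G Filter.atTop (nhds 0) := by
    have e0 := expTermTendsto t 0 ht
    have e1 := expTermTendsto t 1 ht
    have e2 := expTermTendsto t 2 ht
    have := ((((e0.const_mul 3).sub (e1.const_mul 4)).add e2).neg).div_const 8
    simpa [hG] using this
  constructor
  · exact integrableOn_Ioi_deriv_of_nonneg' hderiv hpos htend
  · rw [integral_Ioi_of_hasDerivAt_of_nonneg' hderiv hpos htend]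
    have ht1 : t^2 + 1 ≠ 0 := by positivity
    have ht4 : (t:ℝ)^2 + 4 ≠ 0 := by positivity
    have htz : t ≠ 0 := ne_of_gt ht
    simp only [hG, mul_zero, zero_mul, Real.cos_zero, Real.sin_zero, Real.exp_zero]
    norm_num
    field_simp
    ring

lemma lemC :
    IntegrableOn (fun t : ℝ => t^2/2 * ((3/t - 4*t/(t^2+1) + t/(t^2+4)) / 8)) (Set.Ioi 0) volume ∧
    ∫ t in Set.Ioi (0:ℝ), t^2/2 * ((3/t - 4*t/(t^2+1) + t/(t^2+4)) / 8) = Real.log 2 / 4 := by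
  set H : ℝ → ℝ := fun t => (Real.log (t^2+1) - Real.log (t^2+4)) / 8 with hH
  have hderiv : ∀ t ∈ Set.Ioi (0:ℝ),
      HasDerivAt H (t^2/2 * ((3/t - 4*t/(t^2+1) + t/(t^2+4)) / 8)) t := by
    intro t htt
    have ht : (0:ℝ) < t := htt
    have ht1 : (0:ℝ) < t^2+1 := by positivity
    have ht4 : (0:ℝ) < t^2+4 := by positivity
    have hp : HasDerivAt (fun t : ℝ => t^2+1) (2*t) t := by
      simpa using (hasDerivAt_pow 2 t).add_const 1
    have hq : HasDerivAt (fun t : ℝ => t^2+4) (2*t) t := by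
      simpa using (hasDerivAt_pow 2 t).add_const 4
    have hl1 : HasDerivAt (fun t : ℝ => Real.log (t^2+1)) (2*t/(t^2+1)) t :=
      hp.log (ne_of_gt ht1)
    have hl2 : HasDerivAt (fun t : ℝ => Real.log (t^2+4)) (2*t/(t^2+4)) t :=
      hq.log (ne_of_gt ht4)
    have := (hl1.sub hl2).div_const 8
    refine this.congr_deriv ?_
    field_simp
    ring
  have hcont : ContinuousWithinAt H (Set.Ici 0) 0 := by
    apply ContinuousAt.continuousWithinAt
    have c1 : ContinuousAt (fun t : ℝ => Real.log (t^2+1)) 0 := by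
      apply (Real.continuousAt_log (by norm_num)).comp
      fun_prop
    have c2 : ContinuousAt (fun t : ℝ => Real.log (t^2+4)) 0 := by
      apply (Real.continuousAt_log (by norm_num)).comp
      fun_prop
    exact (c1.sub c2).div_const 8
  have hpos : ∀ t ∈ Set.Ioi (0:ℝ), 0 ≤ t^2/2 * ((3/t - 4*t/(t^2+1) + t/(t^2+4)) / 8) := by
    intro t htt
    have ht : (0:ℝ) < t := htt
    have ht1 : (0:ℝ) < t^2+1 := by positivity
    have ht4 : (0:ℝ) < t^2+4 := by positivity
    have key : t^2/2 * ((3/t - 4*t/(t^2+1) + t/(t^2+4)) / 8)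
        = 3/4 * (t / ((t^2+1)*(t^2+4))) := by
      field_simp
      ring
    rw [key]
    positivity
  have htend : Filter.Tendsto H Filter.atTop (nhds 0) := by
    have key : ∀ t : ℝ, 0 < t → H t = Real.log ((t^2+1)/(t^2+4)) / 8 := by
      intro t ht
      have ht1 : (0:ℝ) < t^2+1 := by positivity
      have ht4 : (0:ℝ) < t^2+4 := by positivity
      rw [hH, Real.log_div (ne_of_gt ht1) (ne_of_gt ht4)]
    have hfrac : Filter.Tendsto (fun t : ℝ => (t^2+1)/(t^2+4)) Filter.atTop (nhds 1) := by
      have h4 : Filter.Tendsto (fun t : ℝ => t^2+4) Filter.atTop Filter.atTop := by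
        apply Filter.tendsto_atTop_add_const_right
        exact tendsto_pow_atTop (by norm_num)
      have h3 : Filter.Tendsto (fun t : ℝ => 3/(t^2+4)) Filter.atTop (nhds 0) :=
        tendsto_const_nhds.div_atTop h4
      have heq : ∀ t : ℝ, (t^2+1)/(t^2+4) = 1 - 3/(t^2+4) := by
        intro t
        have ht4 : (0:ℝ) < t^2+4 := by positivity
        field_simp
        ring
      simp only [heq]
      simpa using (tendsto_const_nhds (x := (1:ℝ))).sub h3
    have hlog : Filter.Tendsto (fun t : ℝ => Real.log ((t^2+1)/(t^2+4)) / 8)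
        Filter.atTop (nhds 0) := by
      have := ((Real.continuousAt_log (by norm_num : (1:ℝ) ≠ 0)).tendsto.comp hfrac).div_const 8
      simpa using this
    refine hlog.congr' ?_
    filter_upwards [Filter.eventually_gt_atTop 0] with t ht
    exact (key t ht).symm
  have hH0 : H 0 = -(Real.log 2 / 4) := by
    have h4 : (4:ℝ) = 2^2 := by norm_num
    simp only [hH]
    norm_num
    rw [h4, Real.log_pow]
    ring
  constructor
  · exact integrableOn_Ioi_deriv_of_nonneg hcont hderiv hpos htend
  · rw [integral_Ioi_of_hasDerivAt_of_nonneg hcont hderiv hpos htend, hH0]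
    ring

/-- The improper integral `∫_0^∞ sin⁴(v/2)/v³ dv` converges and equals `(ln 2)/4`. -/
theorem integral_sin_pow_four_div_cube :
    IntegrableOn (fun v : ℝ => Real.sin (v / 2) ^ 4 / v ^ 3) (Set.Ioi 0) volume ∧
    (∫ v in Set.Ioi (0 : ℝ), Real.sin (v / 2) ^ 4 / v ^ 3) = Real.log 2 / 4 := by
  set K : ℝ → ℝ → ℝ := fun v t => Real.sin (v/2)^4 * (t^2 * Real.exp (-(t*v))) / 2 with hK
  have hKnn : ∀ v t : ℝ, 0 ≤ K v t := fun v t => by positivity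
  -- step 1 : inner integral over t
  have step1 : ∀ v ∈ Set.Ioi (0:ℝ),
      ∫⁻ t in Set.Ioi (0:ℝ), ENNReal.ofReal (K v t)
        = ENNReal.ofReal (Real.sin (v / 2) ^ 4 / v ^ 3) := by
    intro v hv
    have hv' : (0:ℝ) < v := hv
    obtain ⟨hA1, hA2⟩ := lemA hv'
    have heq : ∀ t : ℝ, K v t = Real.sin (v/2)^4/2 * (t^2 * Real.exp (-(t*v))) := by
      intro t; simp only [hK]; ring
    have hint : Integrable (fun t => K v t) (volume.restrict (Set.Ioi 0)) := by
      refine (hA1.const_mul (Real.sin (v/2)^4/2)).congr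
        (Filter.Eventually.of_forall fun t => (heq t).symm)
    have hval : ∫ t in Set.Ioi (0:ℝ), K v t = Real.sin (v / 2) ^ 4 / v ^ 3 := by
      simp only [heq]
      rw [MeasureTheory.integral_const_mul, hA2]
      field_simp
    rw [← hval]
    exact (MeasureTheory.ofReal_integral_eq_lintegral_ofReal hint
      (Filter.Eventually.of_forall fun t => hKnn v t)).symm ▸ rfl
  -- step 2 : inner integral over v
  have step2 : ∀ t ∈ Set.Ioi (0:ℝ),
      ∫⁻ v in Set.Ioi (0:ℝ), ENNReal.ofReal (K v t)
        = ENNReal.ofReal (t^2/2 * ((3/t - 4*t/(t^2+1) + t/(t^2+4)) / 8)) := by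
    intro t htt
    have ht : (0:ℝ) < t := htt
    obtain ⟨hB1, hB2⟩ := lemB ht
    have heq : ∀ v : ℝ, K v t = t^2/2 * (Real.sin (v/2)^4 * Real.exp (-(t*v))) := by
      intro v; simp only [hK]; ring
    have hint : Integrable (fun v => K v t) (volume.restrict (Set.Ioi 0)) := by
      refine (hB1.const_mul (t^2/2)).congr
        (Filter.Eventually.of_forall fun v => (heq v).symm)
    have hval : ∫ v in Set.Ioi (0:ℝ), K v t
        = t^2/2 * ((3/t - 4*t/(t^2+1) + t/(t^2+4)) / 8) := by
      simp only [heq]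
      rw [MeasureTheory.integral_const_mul, hB2]
    rw [← hval]
    exact (MeasureTheory.ofReal_integral_eq_lintegral_ofReal hint
      (Filter.Eventually.of_forall fun v => hKnn v t)).symm
  -- swap
  have hmeas : AEMeasurable (fun p : ℝ × ℝ => ENNReal.ofReal (K p.1 p.2))
      ((volume.restrict (Set.Ioi 0)).prod (volume.restrict (Set.Ioi 0))) := by
    apply Measurable.aemeasurable
    apply ENNReal.measurable_ofReal.comp
    apply Continuous.measurable
    fun_prop
  have hswap := MeasureTheory.lintegral_lintegral_swap (μ := volume.restrict (Set.Ioi 0))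
      (ν := volume.restrict (Set.Ioi 0)) (f := fun v t => ENNReal.ofReal (K v t)) hmeas
  -- nonneg of outer integrand a.e.
  have hChnn : 0 ≤ᵐ[volume.restrict (Set.Ioi 0)]
      fun t : ℝ => t^2/2 * ((3/t - 4*t/(t^2+1) + t/(t^2+4)) / 8) := by
    filter_upwards [MeasureTheory.ae_restrict_mem measurableSet_Ioi] with t htt
    have ht : (0:ℝ) < t := htt
    have key : t^2/2 * ((3/t - 4*t/(t^2+1) + t/(t^2+4)) / 8)
        = 3/4 * (t / ((t^2+1)*(t^2+4))) := by
      have ht1 : (0:ℝ) < t^2+1 := by positivity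
      have ht4 : (0:ℝ) < t^2+4 := by positivity
      field_simp
      ring
    rw [key]
    positivity
  -- key lintegral computation
  have key : ∫⁻ v in Set.Ioi (0:ℝ), ENNReal.ofReal (Real.sin (v / 2) ^ 4 / v ^ 3)
      = ENNReal.ofReal (Real.log 2 / 4) := by
    calc ∫⁻ v in Set.Ioi (0:ℝ), ENNReal.ofReal (Real.sin (v / 2) ^ 4 / v ^ 3)
        = ∫⁻ v in Set.Ioi (0:ℝ), ∫⁻ t in Set.Ioi (0:ℝ), ENNReal.ofReal (K v t) := by
          refine (setLIntegral_congr_fun measurableSet_Ioi ?_)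
          exact fun v hv => (step1 v hv).symm
      _ = ∫⁻ t in Set.Ioi (0:ℝ), ∫⁻ v in Set.Ioi (0:ℝ), ENNReal.ofReal (K v t) := hswap
      _ = ∫⁻ t in Set.Ioi (0:ℝ),
            ENNReal.ofReal (t^2/2 * ((3/t - 4*t/(t^2+1) + t/(t^2+4)) / 8)) := by
          refine setLIntegral_congr_fun measurableSet_Ioi ?_
          exact fun t ht => step2 t ht
      _ = ENNReal.ofReal (Real.log 2 / 4) := by
          rw [← MeasureTheory.ofReal_integral_eq_lintegral_ofReal lemC.1 hChnn, lemC.2]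
  -- conclude
  have hfnn : 0 ≤ᵐ[volume.restrict (Set.Ioi 0)]
      fun v : ℝ => Real.sin (v / 2) ^ 4 / v ^ 3 := by
    filter_upwards [MeasureTheory.ae_restrict_mem measurableSet_Ioi] with v hv
    have hv' : (0:ℝ) < v := hv
    exact div_nonneg (by positivity) (by positivity)
  have hfm : AEStronglyMeasurable (fun v : ℝ => Real.sin (v / 2) ^ 4 / v ^ 3)
      (volume.restrict (Set.Ioi 0)) := by
    apply Measurable.aestronglyMeasurable
    apply Measurable.div
    · fun_prop
    · fun_prop
  have hint : IntegrableOn (fun v : ℝ => Real.sin (v / 2) ^ 4 / v ^ 3) (Set.Ioi 0) volume := by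
    refine ⟨hfm, ?_⟩
    rw [MeasureTheory.hasFiniteIntegral_iff_ofReal hfnn, key]
    exact ENNReal.ofReal_lt_top
  refine ⟨hint, ?_⟩
  rw [MeasureTheory.integral_eq_lintegral_of_nonneg_ae hfnn hfm, key,
    ENNReal.toReal_ofReal (by positivity)]
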